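/- Let n, j, k be natural numbers with j + k ≤ n + 1. Suppose a binary form p of degree n over ℂ admits two representations p = Σ_{i=1}^{j} c_i ℓ_iⁿ = Σ_{i=1}^{k} d_i ℓ'_iⁿ, where all coefficients c_i and d_i are nonzero complex numbers, ℓ₁, …, ℓ_j are nonzero pairwise non-proportional linear forms, and ℓ'₁, …, ℓ'_k are nonzero pairwise non-proportional linear forms. Then j = k, and there is a permutation σ of {1, …, k} such that for each i the linear form ℓ'_{σ(i)} is proportional to ℓ_i. -/

import Mathlib

open MvPolynomial

/-- The linear form `a*X + b*Y` in `ℂ[X,Y]`. -/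
noncomputable def lin (a b : ℂ) : MvPolynomial (Fin 2) ℂ :=
  MvPolynomial.C a * MvPolynomial.X 0 + MvPolynomial.C b * MvPolynomial.X 1

/-- The partial derivative `∂_X` (for `i = 0`) or `∂_Y` (for `i = 1`) as a linear map. -/
noncomputable def pd (i : Fin 2) :
    MvPolynomial (Fin 2) ℂ →ₗ[ℂ] MvPolynomial (Fin 2) ℂ :=
  (MvPolynomial.pderiv i).toLinearMap

/-- The apolarity operator `q(∂) = Σ q_{ij} ∂_X^i ∂_Y^j`, as a linear map on `ℂ[X,Y]`. -/
noncomputable def apolarL (q : MvPolynomial (Fin 2) ℂ) :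
    MvPolynomial (Fin 2) ℂ →ₗ[ℂ] MvPolynomial (Fin 2) ℂ :=
  q.support.sum fun m => q.coeff m • (pd 0 ^ m 0 * pd 1 ^ m 1)

/-- The apolarity pairing `⟨q, p⟩`: the value of the constant polynomial `q(∂)p`. -/
noncomputable def pairing (q p : MvPolynomial (Fin 2) ℂ) : ℂ :=
  MvPolynomial.coeff 0 (apolarL q p)

noncomputable def Dop (a b : ℂ) : Module.End ℂ (MvPolynomial (Fin 2) ℂ) :=
  b • pd 0 - a • pd 1

lemma pd_apply (i : Fin 2) (p : MvPolynomial (Fin 2) ℂ) : pd i p = pderiv i p := rfl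

lemma pd_comm : (pd 0) * (pd 1) = (pd 1) * (pd 0 : Module.End ℂ (MvPolynomial (Fin 2) ℂ)) := by
  apply LinearMap.ext; intro p
  induction p using MvPolynomial.induction_on' with
  | monomial u a =>
    simp [pd, Module.End.mul_apply, Finsupp.tsub_apply, tsub_tsub, add_comm]
    ring
  | add p q hp hq => simp [map_add, hp, hq]

lemma Dop_comm (a b a' b' : ℂ) : Commute (Dop a b) (Dop a' b') := by
  unfold Commute SemiconjBy Dop
  simp only [sub_mul, mul_sub, smul_mul_assoc, mul_smul_comm, smul_smul, pd_comm,
    smul_sub, mul_comm]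
  abel

lemma Dop_lin_pow (a' b' a b : ℂ) (t : ℕ) :
    Dop a' b' (lin a b ^ (t+1)) = (((t:ℂ)+1) * (b' * a - a' * b)) • lin a b ^ t := by
  have h0 : pderiv 0 (lin a b) = C a := by simp [lin, pderiv_C_mul]
  have h1 : pderiv 1 (lin a b) = C b := by simp [lin, pderiv_C_mul]
  have P0 : pderiv 0 (lin a b ^ (t+1)) = C ((t:ℂ)+1) * lin a b ^ t * C a := by
    rw [pderiv_pow, h0, Nat.add_sub_cancel]
    norm_num [C_eq_coe_nat]
  have P1 : pderiv 1 (lin a b ^ (t+1)) = C ((t:ℂ)+1) * lin a b ^ t * C b := by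
    rw [pderiv_pow, h1, Nat.add_sub_cancel]
    norm_num [C_eq_coe_nat]
  simp only [Dop, LinearMap.sub_apply, LinearMap.smul_apply, pd_apply, P0, P1, smul_eq_C_mul,
    map_mul, map_add, map_sub, map_one]
  ring

lemma lin_ne_zero {a b : ℂ} (h : (a, b) ≠ (0, 0)) : lin a b ≠ 0 := by
  intro h0
  apply h
  have ha : coeff (Finsupp.single 0 1) (lin a b) = a := by
    simp [lin, coeff_X', Finsupp.single_eq_single_iff]
  have hb : coeff (Finsupp.single 1 1) (lin a b) = b := by
    simp [lin, coeff_X', Finsupp.single_eq_single_iff]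
  rw [h0] at ha hb
  simp at ha hb
  simp [← ha, ← hb]

lemma hcomm_univ {ι : Type*} (A B : ι → ℂ) (s : Finset ι) :
    (s : Set ι).Pairwise fun i i' => Commute (Dop (A i) (B i)) (Dop (A i') (B i')) :=
  fun i _ i' _ _ => Dop_comm _ _ _ _

lemma noncommProd_apply {ι : Type*} [DecidableEq ι] (A B : ι → ℂ) (a b : ℂ)
    (s : Finset ι) (t : ℕ) (hst : s.card ≤ t) :
    (s.noncommProd (fun i => Dop (A i) (B i)) (hcomm_univ A B s)) (lin a b ^ t)
      = ((∏ r ∈ Finset.range s.card, ((t - r : ℕ) : ℂ)) * ∏ i ∈ s, (B i * a - A i * b))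
          • lin a b ^ (t - s.card) := by
  induction s using Finset.induction_on with
  | empty => simp
  | @insert x s hx ih =>
    rw [Finset.noncommProd_insert_of_notMem _ _ _ _ hx]
    rw [Finset.card_insert_of_notMem hx] at hst ⊢
    have hs : s.card ≤ t := le_trans (Nat.le_succ _) hst
    rw [Module.End.mul_apply, ih hs]
    have hu : t - s.card = (t - (s.card + 1)) + 1 := by omega
    rw [map_smul, hu, Dop_lin_pow]
    rw [Finset.prod_insert hx, Finset.prod_range_succ, smul_smul]
    congr 1
    have : ((t - (s.card + 1) : ℕ) : ℂ) + 1 = ((t - s.card : ℕ) : ℂ) := by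
      have : t - (s.card + 1) + 1 = t - s.card := by omega
      rw [← this]; push_cast; ring
    rw [this]
    ring

lemma coeff_zero_of_indep {ι : Type*} [DecidableEq ι] (n : ℕ) (A B e : ι → ℂ) (s : Finset ι)
    (hcard : s.card ≤ n + 1) (x0 : ι) (hx0 : x0 ∈ s)
    (hne : (A x0, B x0) ≠ (0, 0))
    (hdet : ∀ x ∈ s, x ≠ x0 → B x * A x0 - A x * B x0 ≠ 0)
    (h : ∑ x ∈ s, e x • lin (A x) (B x) ^ n = 0) : e x0 = 0 := by
  set s' := s.erase x0 with hs'
  have hcard' : s'.card ≤ n := by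
    rw [hs', Finset.card_erase_of_mem hx0]; omega
  set T := s'.noncommProd (fun i => Dop (A i) (B i)) (hcomm_univ A B s') with hT
  have hTsum : T (∑ x ∈ s, e x • lin (A x) (B x) ^ n) = 0 := by rw [h, map_zero]
  rw [map_sum] at hTsum
  have hvanish : ∀ x ∈ s, x ≠ x0 → T (e x • lin (A x) (B x) ^ n) = 0 := by
    intro x hxs hxne
    have hxs' : x ∈ s' := Finset.mem_erase.2 ⟨hxne, hxs⟩
    rw [map_smul, hT, noncommProd_apply A B (A x) (B x) s' n hcard']
    have : ∏ i ∈ s', (B i * A x - A i * B x) = 0 :=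
      Finset.prod_eq_zero hxs' (by ring)
    rw [this, mul_zero, zero_smul, smul_zero]
  have hsum2 : ∑ x ∈ s, T (e x • lin (A x) (B x) ^ n)
      = T (e x0 • lin (A x0) (B x0) ^ n) := by
    rw [Finset.sum_eq_single x0]
    · intro x hxs hxne; exact hvanish x hxs hxne
    · intro hx; exact absurd hx0 hx
  rw [hsum2] at hTsum
  rw [map_smul, hT, noncommProd_apply A B (A x0) (B x0) s' n hcard'] at hTsum
  have hF : (∏ r ∈ Finset.range s'.card, ((n - r : ℕ) : ℂ)) ≠ 0 := by
    apply Finset.prod_ne_zero_iff.2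
    intro r hr
    rw [Finset.mem_range] at hr
    have hrn : r < n := lt_of_lt_of_le hr hcard'
    exact Nat.cast_ne_zero.2 (by omega)
  have hP : (∏ i ∈ s', (B i * A x0 - A i * B x0)) ≠ 0 := by
    apply Finset.prod_ne_zero_iff.2
    intro i hi
    rw [hs', Finset.mem_erase] at hi
    exact hdet i hi.2 hi.1
  have hlin : lin (A x0) (B x0) ^ (n - s'.card) ≠ 0 :=
    pow_ne_zero _ (lin_ne_zero hne)
  rw [smul_smul, smul_eq_zero] at hTsum
  rcases hTsum with h1 | h2
  · rcases mul_eq_zero.1 h1 with h3 | h4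
    · exact h3
    · exact absurd h4 (mul_ne_zero hF hP)
  · exact absurd h2 hlin

lemma lin_smul (t a b : ℂ) : t • lin a b = lin (t*a) (t*b) := by
  simp [lin, MvPolynomial.smul_eq_C_mul]; ring

lemma det0_prop {a b a' b' : ℂ} (h : (a, b) ≠ (0, 0)) (hd : b' * a - a' * b = 0) :
    ∃ t : ℂ, a' = t * a ∧ b' = t * b := by
  by_cases ha : a = 0
  · have hb : b ≠ 0 := fun hb => h (by simp [ha, hb])
    have ha' : a' = 0 := by
      have : a' * b = 0 := by linear_combination -hd + b' * ha
      rcases mul_eq_zero.1 this with h1 | h2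
      · exact h1
      · exact absurd h2 hb
    exact ⟨b'/b, by simp [ha, ha'], by field_simp⟩
  · refine ⟨a'/a, by field_simp, ?_⟩
    field_simp
    linear_combination hd

lemma prop_of_det0 {a b a' b' : ℂ} (h : (a, b) ≠ (0, 0)) (hd : b' * a - a' * b = 0) :
    ∃ t : ℂ, lin a' b' = t • lin a b := by
  obtain ⟨t, h1, h2⟩ := det0_prop h hd
  exact ⟨t, by rw [lin_smul, h1, h2]⟩

lemma det_ne_of_nonprop {a b a' b' : ℂ} (h : (a, b) ≠ (0, 0))
    (hnp : ∀ t : ℂ, lin a' b' ≠ t • lin a b) : b' * a - a' * b ≠ 0 := by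
  intro hd
  obtain ⟨t, ht⟩ := prop_of_det0 h hd
  exact hnp t ht

/-- Uniqueness of Waring decompositions with j + k ≤ n + 1 summands in total. -/
theorem waring_decomposition_unique
    (n j k : ℕ) (hjk : j + k ≤ n + 1)
    (a b : Fin j → ℂ) (a' b' : Fin k → ℂ) (c : Fin j → ℂ) (d : Fin k → ℂ)
    (hc : ∀ i, c i ≠ 0) (hd : ∀ i, d i ≠ 0)
    (hne : ∀ i, (a i, b i) ≠ (0, 0)) (hne' : ∀ i, (a' i, b' i) ≠ (0, 0))
    (hprop : ∀ i i', i ≠ i' → ∀ t : ℂ, lin (a i) (b i) ≠ t • lin (a i') (b i'))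
    (hprop' : ∀ i i', i ≠ i' → ∀ t : ℂ, lin (a' i) (b' i) ≠ t • lin (a' i') (b' i'))
    (heq : ∑ i : Fin j, c i • lin (a i) (b i) ^ n
         = ∑ i : Fin k, d i • lin (a' i) (b' i) ^ n) :
    j = k ∧ ∃ σ : Fin j ≃ Fin k, ∀ i : Fin j,
      ∃ t : ℂ, lin (a' (σ i)) (b' (σ i)) = t • lin (a i) (b i) := by
  classical
  set A : Fin j ⊕ Fin k → ℂ := Sum.elim a a' with hA
  set B : Fin j ⊕ Fin k → ℂ := Sum.elim b b' with hB
  set e : Fin j ⊕ Fin k → ℂ := Sum.elim c (fun i => -(d i)) with hE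
  have hsum : ∑ x ∈ Finset.univ, e x • lin (A x) (B x) ^ n = 0 := by
    rw [Fintype.sum_sum_type]
    simp only [hA, hB, hE, Sum.elim_inl, Sum.elim_inr, neg_smul]
    rw [heq, ← Finset.sum_add_distrib]
    simp
  have hcard : (Finset.univ : Finset (Fin j ⊕ Fin k)).card ≤ n + 1 := by
    simpa using hjk
  -- every left index is matched
  have hmatch : ∀ i : Fin j, ∃ i' : Fin k, b' i' * a i - a' i' * b i = 0 := by
    intro i
    by_contra hun
    push_neg at hun
    have hzero : e (Sum.inl i) = 0 := by
      apply coeff_zero_of_indep n A B e Finset.univ hcard (Sum.inl i) (Finset.mem_univ _)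
        (by simpa [hA, hB] using hne i) ?_ hsum
      rintro (x | x) _ hxne
      · simp only [hA, hB, Sum.elim_inl]
        exact det_ne_of_nonprop (hne i)
          (hprop x i (fun hxi => hxne (by rw [hxi])))
      · simp only [hA, hB, Sum.elim_inl, Sum.elim_inr]
        exact hun x
    exact hc i (by simpa [hE] using hzero)
  -- every right index is matched
  have hmatch' : ∀ i' : Fin k, ∃ i : Fin j, b i * a' i' - a i * b' i' = 0 := by
    intro i'
    by_contra hun
    push_neg at hun
    have hzero : e (Sum.inr i') = 0 := by
      apply coeff_zero_of_indep n A B e Finset.univ hcard (Sum.inr i') (Finset.mem_univ _)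
        (by simpa [hA, hB] using hne' i') ?_ hsum
      rintro (x | x) _ hxne
      · simp only [hA, hB, Sum.elim_inl, Sum.elim_inr]
        exact hun x
      · simp only [hA, hB, Sum.elim_inr]
        exact det_ne_of_nonprop (hne' i')
          (hprop' x i' (fun hxi => hxne (by rw [hxi])))
    exact hd i' (by simpa [hE] using hzero)
  choose f hf using hmatch
  choose g hg using hmatch'
  have hfinj : Function.Injective f := by
    intro i1 i2 h12
    by_contra hne12
    obtain ⟨t1, ht1⟩ := prop_of_det0 (hne i1) (hf i1)
    obtain ⟨t2, ht2⟩ := prop_of_det0 (hne i2) (hf i2)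
    rw [h12] at ht1
    have ht1ne : t1 ≠ 0 := by
      intro h0
      rw [h0, zero_smul] at ht1
      exact lin_ne_zero (hne' (f i2)) ht1
    have key : t1 • lin (a i1) (b i1) = t2 • lin (a i2) (b i2) := by rw [← ht1, ht2]
    have : lin (a i1) (b i1) = (t1⁻¹ * t2) • lin (a i2) (b i2) := by
      calc lin (a i1) (b i1) = t1⁻¹ • (t1 • lin (a i1) (b i1)) := by
            rw [smul_smul, inv_mul_cancel₀ ht1ne, one_smul]
        _ = (t1⁻¹ * t2) • lin (a i2) (b i2) := by rw [key, smul_smul]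
    exact hprop i1 i2 hne12 _ this
  have hginj : Function.Injective g := by
    intro i1 i2 h12
    by_contra hne12
    obtain ⟨t1, ht1⟩ := prop_of_det0 (hne' i1) (hg i1)
    obtain ⟨t2, ht2⟩ := prop_of_det0 (hne' i2) (hg i2)
    rw [h12] at ht1
    have ht1ne : t1 ≠ 0 := by
      intro h0
      rw [h0, zero_smul] at ht1
      exact lin_ne_zero (hne (g i2)) ht1
    have key : t1 • lin (a' i1) (b' i1) = t2 • lin (a' i2) (b' i2) := by rw [← ht1, ht2]
    have : lin (a' i1) (b' i1) = (t1⁻¹ * t2) • lin (a' i2) (b' i2) := by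
      calc lin (a' i1) (b' i1) = t1⁻¹ • (t1 • lin (a' i1) (b' i1)) := by
            rw [smul_smul, inv_mul_cancel₀ ht1ne, one_smul]
        _ = (t1⁻¹ * t2) • lin (a' i2) (b' i2) := by rw [key, smul_smul]
    exact hprop' i1 i2 hne12 _ this
  have hjk' : j = k := by
    have h1 : j ≤ k := by simpa using Fintype.card_le_of_injective f hfinj
    have h2 : k ≤ j := by simpa using Fintype.card_le_of_injective g hginj
    omega
  have hbij : Function.Bijective f := by
    rw [Fintype.bijective_iff_injective_and_card]
    exact ⟨hfinj, by simp [hjk']⟩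
  refine ⟨hjk', Equiv.ofBijective f hbij, fun i => ?_⟩
  exact prop_of_det0 (hne i) (hf i)
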